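/- Let D ⊂ ℝ² be a bounded domain. Suppose G: (0,∞) × D × D → ℝ satisfies |G(r, x, y)| ≤ M (√r + |x−y|)^{−2} e^{−c r} for constants M, c > 0. Then for every p ≥ 1 there is a constant C = C(p, D, M, c) such that the function ρ(x, y) = ∫₀^∞ ∫_D G(r, x, z) G(r, y, z) dz dr satisfies ‖ρ‖_{L^p(D × D)} ≤ C. -/

import Mathlib

open MeasureTheory Real Set

open Metric
open scoped ENNReal

private lemma lint_lt_top_of_int {α : Type*} [MeasurableSpace α] {μ : Measure α} {f : α → ℝ}
    (h : Integrable f μ) : ∫⁻ t, ENNReal.ofReal (f t) ∂μ < ∞ := by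
  refine lt_of_le_of_lt (lintegral_mono fun t => ?_) h.2
  rw [Real.enorm_eq_ofReal_abs]; exact ENNReal.ofReal_le_ofReal (le_abs_self _)

private lemma riesz_finite {s : ℝ} (hs0 : 0 < s) (hs2 : s < 2) (T : ℝ) :
    ∫⁻ w in closedBall (0 : EuclideanSpace ℝ (Fin 2)) T, ENNReal.ofReal (‖w‖ ^ (-s)) < ∞ := by
  set E := EuclideanSpace ℝ (Fin 2)
  set μ : Measure E := volume.restrict (closedBall (0 : E) T) with hμ
  have hmble : Measurable fun w : E => ‖w‖ ^ (-s) := by fun_prop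
  have h_nn : ∀ w : E, 0 ≤ ‖w‖ ^ (-s) := fun w => rpow_nonneg (norm_nonneg _) _
  rw [lintegral_eq_lintegral_meas_le μ (Filter.Eventually.of_forall h_nn) hmble.aemeasurable]
  have hsub : ∀ t : ℝ, 0 < t → {w : E | t ≤ ‖w‖ ^ (-s)} ⊆ closedBall 0 (t ^ (-s⁻¹)) := by
    intro t ht w hw
    simp only [mem_setOf_eq] at hw
    rcases eq_or_ne w 0 with rfl | hw0
    · simp only [norm_zero, Real.zero_rpow (by linarith : -s ≠ 0)] at hw; linarith
    · have hnw : 0 < ‖w‖ := norm_pos_iff.mpr hw0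
      have := Real.rpow_le_rpow_of_nonpos ht hw (neg_nonpos.mpr (inv_nonneg.mpr hs0.le))
      rw [← Real.rpow_mul hnw.le] at this
      rw [mem_closedBall_zero_iff]
      calc ‖w‖ = ‖w‖ ^ ((-s) * -s⁻¹) := by
            rw [neg_mul_neg, mul_inv_cancel₀ hs0.ne', Real.rpow_one]
        _ ≤ t ^ (-s⁻¹) := this
  calc ∫⁻ t in Ioi (0:ℝ), μ {w | t ≤ ‖w‖ ^ (-s)}
      ≤ ∫⁻ t in Ioc (0:ℝ) 1 ∪ Ioi 1, μ {w | t ≤ ‖w‖ ^ (-s)} :=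
        lintegral_mono_set Ioi_subset_Ioc_union_Ioi
    _ ≤ (∫⁻ t in Ioc (0:ℝ) 1, μ {w | t ≤ ‖w‖ ^ (-s)}) +
        ∫⁻ t in Ioi (1:ℝ), μ {w | t ≤ ‖w‖ ^ (-s)} := lintegral_union_le _ _ _
    _ < ∞ := by
        refine ENNReal.add_lt_top.2 ⟨?_, ?_⟩
        · calc (∫⁻ t in Ioc (0:ℝ) 1, μ {w | t ≤ ‖w‖ ^ (-s)})
              ≤ ∫⁻ _ in Ioc (0:ℝ) 1, volume (closedBall (0:E) T) := by
                refine lintegral_mono fun t => ?_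
                calc μ _ ≤ μ univ := measure_mono (subset_univ _)
                  _ = volume (closedBall (0:E) T) := by rw [hμ, Measure.restrict_apply_univ]
            _ = volume (closedBall (0:E) T) * volume (Ioc (0:ℝ) 1) := by
                rw [setLIntegral_const]
            _ < ∞ := by
                refine ENNReal.mul_lt_top (isCompact_closedBall _ _).measure_lt_top ?_
                simp [Real.volume_Ioc]
        · have hmB : volume (ball (0:E) 1) < ∞ := measure_ball_lt_top
          calc (∫⁻ t in Ioi (1:ℝ), μ {w | t ≤ ‖w‖ ^ (-s)})
              ≤ ∫⁻ t in Ioi (1:ℝ), ENNReal.ofReal (t ^ (-(2/s))) * volume (ball (0:E) 1) := by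
                refine setLIntegral_mono (by fun_prop) fun t ht => ?_
                have ht0 : (0:ℝ) < t := lt_trans one_pos ht
                calc μ {w | t ≤ ‖w‖ ^ (-s)} ≤ volume {w : E | t ≤ ‖w‖ ^ (-s)} :=
                      Measure.restrict_le_self _
                  _ ≤ volume (closedBall (0:E) (t ^ (-s⁻¹))) := measure_mono (hsub t ht0)
                  _ = ENNReal.ofReal ((t ^ (-s⁻¹)) ^ Module.finrank ℝ E) *
                        volume (ball (0:E) 1) :=
                      Measure.addHaar_closedBall volume _ (rpow_nonneg ht0.le _)
                  _ = ENNReal.ofReal (t ^ (-(2/s))) * volume (ball (0:E) 1) := by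
                      congr 2
                      rw [show Module.finrank ℝ E = 2 from finrank_euclideanSpace_fin,
                        ← Real.rpow_natCast (t ^ (-s⁻¹)) 2, ← Real.rpow_mul ht0.le]
                      norm_num
                      rw [div_eq_mul_inv, mul_comm]
            _ = (∫⁻ t in Ioi (1:ℝ), ENNReal.ofReal (t ^ (-(2/s)))) * volume (ball (0:E) 1) :=
                lintegral_mul_const' _ _ hmB.ne
            _ < ∞ := by
                refine ENNReal.mul_lt_top ?_ hmB
                refine lint_lt_top_of_int (integrableOn_Ioi_rpow_of_lt ?_ one_pos)
                rw [neg_lt_neg_iff, lt_div_iff₀ hs0]; linarith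

private lemma gamma_finite {t c' : ℝ} (ht0 : 0 < t) (ht1 : t < 1) (hc' : 0 < c') :
    ∫⁻ r in Ioi (0:ℝ), ENNReal.ofReal (r ^ (t - 1) * Real.exp (-c' * r)) < ∞ := by
  calc ∫⁻ r in Ioi (0:ℝ), ENNReal.ofReal (r ^ (t - 1) * Real.exp (-c' * r))
      ≤ ∫⁻ r in Ioc (0:ℝ) 1 ∪ Ioi 1, ENNReal.ofReal (r ^ (t - 1) * Real.exp (-c' * r)) :=
        lintegral_mono_set Ioi_subset_Ioc_union_Ioi
    _ ≤ (∫⁻ r in Ioc (0:ℝ) 1, ENNReal.ofReal (r ^ (t - 1) * Real.exp (-c' * r))) +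
        ∫⁻ r in Ioi (1:ℝ), ENNReal.ofReal (r ^ (t - 1) * Real.exp (-c' * r)) :=
        lintegral_union_le _ _ _
    _ < ∞ := by
        refine ENNReal.add_lt_top.2 ⟨?_, ?_⟩
        · calc (∫⁻ r in Ioc (0:ℝ) 1, ENNReal.ofReal (r ^ (t - 1) * Real.exp (-c' * r)))
              ≤ ∫⁻ r in Ioc (0:ℝ) 1, ENNReal.ofReal (r ^ (t - 1)) := by
                refine setLIntegral_mono (by fun_prop) fun r hr => ?_
                refine ENNReal.ofReal_le_ofReal ?_
                refine mul_le_of_le_one_right (rpow_nonneg hr.1.le _) ?_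
                exact Real.exp_le_one_iff.2 (by nlinarith [hr.1])
            _ < ∞ := by
                have hint : IntegrableOn (fun r : ℝ => r ^ (t - 1)) (Ioc (0:ℝ) 1) := by
                  rw [← intervalIntegrable_iff_integrableOn_Ioc_of_le zero_le_one]
                  exact intervalIntegral.intervalIntegrable_rpow' (by linarith)
                exact lint_lt_top_of_int hint
        · calc (∫⁻ r in Ioi (1:ℝ), ENNReal.ofReal (r ^ (t - 1) * Real.exp (-c' * r)))
              ≤ ∫⁻ r in Ioi (1:ℝ), ENNReal.ofReal (Real.exp (-c' * r)) := by
                refine setLIntegral_mono (by fun_prop) fun r hr => ?_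
                refine ENNReal.ofReal_le_ofReal ?_
                refine mul_le_of_le_one_left (Real.exp_pos _).le ?_
                exact Real.rpow_le_one_of_one_le_of_nonpos (le_of_lt hr) (by linarith)
            _ < ∞ := lint_lt_top_of_int ((exp_neg_integrableOn_Ioi 1 hc').mono_set subset_rfl)

private lemma pw_bound {u v θ : ℝ} (hu : 0 < u) (hv : 0 < v) (hθ0 : 0 ≤ θ) (hθ1 : θ ≤ 1) :
    (u + v) ^ (-(2:ℝ)) ≤ u ^ (2*θ - 2) * v ^ (-(2*θ)) := by
  have hmaxpos : 0 < max u v := lt_of_lt_of_le hu (le_max_left _ _)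
  have hmax : u ^ (1-θ) * v ^ θ ≤ u + v := by
    calc u ^ (1-θ) * v ^ θ ≤ (max u v) ^ (1-θ) * (max u v) ^ θ := by
          refine mul_le_mul (Real.rpow_le_rpow hu.le (le_max_left _ _) (by linarith))
            (Real.rpow_le_rpow hv.le (le_max_right _ _) hθ0)
            (rpow_nonneg hv.le _) (rpow_nonneg hmaxpos.le _)
      _ = (max u v) ^ ((1-θ) + θ) := (Real.rpow_add hmaxpos _ _).symm
      _ = max u v := by norm_num
      _ ≤ u + v := max_le (le_add_of_nonneg_right hv.le) (le_add_of_nonneg_left hu.le)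
  have hw : 0 < u ^ (1-θ) * v ^ θ := mul_pos (rpow_pos_of_pos hu _) (rpow_pos_of_pos hv _)
  calc (u + v) ^ (-(2:ℝ)) ≤ (u ^ (1-θ) * v ^ θ) ^ (-(2:ℝ)) :=
        Real.rpow_le_rpow_of_nonpos hw hmax (by norm_num)
    _ = u ^ (2*θ - 2) * v ^ (-(2*θ)) := by
        rw [Real.mul_rpow (rpow_nonneg hu.le _) (rpow_nonneg hv.le _),
          ← Real.rpow_mul hu.le, ← Real.rpow_mul hv.le,
          show (1-θ) * (-2) = 2*θ - 2 by ring, show θ * (-2:ℝ) = -(2*θ) by ring]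

private lemma prod_bound_aux {rr d1 d2 dd b a : ℝ} (hr : 0 < rr) (hd2 : 0 < d2)
    (hdd : 0 < dd) (hge : dd/2 ≤ d1) (hb0 : 0 < b) (hb1 : b ≤ 1) (ha0 : 0 < a) (ha1 : a ≤ 1) :
    (Real.sqrt rr + d1) ^ (-(2:ℝ)) * (Real.sqrt rr + d2) ^ (-(2:ℝ)) ≤
      ((dd/2) ^ (-(2*b)) * rr ^ (b-1)) * (rr ^ (a-1) * d2 ^ (-(2*a))) := by
  have hsq : 0 < Real.sqrt rr := Real.sqrt_pos.2 hr
  have hhalf : 0 < dd/2 := by linarith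
  have hsqe : ∀ e : ℝ, Real.sqrt rr ^ (2*e - 2) = rr ^ (e - 1) := by
    intro e
    rw [Real.sqrt_eq_rpow, ← Real.rpow_mul hr.le]
    congr 1; ring
  have h1 : (Real.sqrt rr + d1) ^ (-(2:ℝ)) ≤ rr ^ (b-1) * (dd/2) ^ (-(2*b)) := by
    calc (Real.sqrt rr + d1) ^ (-(2:ℝ)) ≤ (Real.sqrt rr + dd/2) ^ (-(2:ℝ)) :=
          Real.rpow_le_rpow_of_nonpos (by positivity) (by linarith) (by norm_num)
      _ ≤ Real.sqrt rr ^ (2*b-2) * (dd/2) ^ (-(2*b)) := pw_bound hsq hhalf hb0.le hb1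
      _ = rr ^ (b-1) * (dd/2) ^ (-(2*b)) := by rw [hsqe]
  have h2 : (Real.sqrt rr + d2) ^ (-(2:ℝ)) ≤ rr ^ (a-1) * d2 ^ (-(2*a)) := by
    calc (Real.sqrt rr + d2) ^ (-(2:ℝ))
        ≤ Real.sqrt rr ^ (2*a-2) * d2 ^ (-(2*a)) := pw_bound hsq hd2 ha0.le ha1
      _ = rr ^ (a-1) * d2 ^ (-(2*a)) := by rw [hsqe]
  calc (Real.sqrt rr + d1) ^ (-(2:ℝ)) * (Real.sqrt rr + d2) ^ (-(2:ℝ))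
      ≤ (rr ^ (b-1) * (dd/2) ^ (-(2*b))) * (rr ^ (a-1) * d2 ^ (-(2*a))) := by
        refine mul_le_mul h1 h2 (rpow_nonneg (by positivity) _) (by positivity)
    _ = ((dd/2) ^ (-(2*b)) * rr ^ (b-1)) * (rr ^ (a-1) * d2 ^ (-(2*a))) := by ring

private lemma prod_bound {rr d1 d2 dd b a : ℝ} (hr : 0 < rr) (hd1 : 0 < d1) (hd2 : 0 < d2)
    (hdd : 0 < dd) (htri : dd ≤ d1 + d2) (hb0 : 0 < b) (hb1 : b ≤ 1)
    (ha0 : 0 < a) (ha1 : a ≤ 1) :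
    (Real.sqrt rr + d1) ^ (-(2:ℝ)) * (Real.sqrt rr + d2) ^ (-(2:ℝ)) ≤
      ((dd/2) ^ (-(2*b)) * rr ^ (b-1)) * (rr ^ (a-1) * (d1 ^ (-(2*a)) + d2 ^ (-(2*a)))) := by
  have hra : 0 ≤ rr ^ (a-1) := rpow_nonneg hr.le _
  have hnn1 : 0 ≤ d1 ^ (-(2*a)) := rpow_nonneg hd1.le _
  have hnn2 : 0 ≤ d2 ^ (-(2*a)) := rpow_nonneg hd2.le _
  have hfac : (0:ℝ) ≤ (dd/2) ^ (-(2*b)) * rr ^ (b-1) := by positivity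
  rcases le_total d1 d2 with h | h
  · have hge : dd/2 ≤ d2 := by linarith
    calc (Real.sqrt rr + d1) ^ (-(2:ℝ)) * (Real.sqrt rr + d2) ^ (-(2:ℝ))
        = (Real.sqrt rr + d2) ^ (-(2:ℝ)) * (Real.sqrt rr + d1) ^ (-(2:ℝ)) := mul_comm _ _
      _ ≤ ((dd/2) ^ (-(2*b)) * rr ^ (b-1)) * (rr ^ (a-1) * d1 ^ (-(2*a))) :=
          prod_bound_aux hr hd1 hdd hge hb0 hb1 ha0 ha1
      _ ≤ ((dd/2) ^ (-(2*b)) * rr ^ (b-1)) *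
            (rr ^ (a-1) * (d1 ^ (-(2*a)) + d2 ^ (-(2*a)))) := by
          refine mul_le_mul_of_nonneg_left ?_ hfac
          exact mul_le_mul_of_nonneg_left (le_add_of_nonneg_right hnn2) hra
  · have hge : dd/2 ≤ d1 := by linarith
    calc (Real.sqrt rr + d1) ^ (-(2:ℝ)) * (Real.sqrt rr + d2) ^ (-(2:ℝ))
        ≤ ((dd/2) ^ (-(2*b)) * rr ^ (b-1)) * (rr ^ (a-1) * d2 ^ (-(2*a))) :=
          prod_bound_aux hr hd2 hdd hge hb0 hb1 ha0 ha1
      _ ≤ ((dd/2) ^ (-(2*b)) * rr ^ (b-1)) *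
            (rr ^ (a-1) * (d1 ^ (-(2*a)) + d2 ^ (-(2*a)))) := by
          refine mul_le_mul_of_nonneg_left ?_ hfac
          exact mul_le_mul_of_nonneg_left (le_add_of_nonneg_left hnn1) hra

private lemma transl {s : ℝ} (x : EuclideanSpace ℝ (Fin 2)) (T : ℝ) :
    ∫⁻ z in closedBall x T, ENNReal.ofReal (dist x z ^ (-s)) =
    ∫⁻ w in closedBall (0 : EuclideanSpace ℝ (Fin 2)) T, ENNReal.ofReal (‖w‖ ^ (-s)) := by
  have hmap : Measure.map (· + x) (volume : Measure (EuclideanSpace ℝ (Fin 2))) = volume :=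
    map_add_right_eq_self volume x
  have hmble : Measurable fun z : EuclideanSpace ℝ (Fin 2) => ENNReal.ofReal (dist x z ^ (-s)) :=
    by fun_prop
  calc ∫⁻ z in closedBall x T, ENNReal.ofReal (dist x z ^ (-s))
      = ∫⁻ z in closedBall x T, ENNReal.ofReal (dist x z ^ (-s))
          ∂(Measure.map (· + x) volume) := by rw [hmap]
    _ = ∫⁻ w in (· + x) ⁻¹' closedBall x T, ENNReal.ofReal (dist x (w + x) ^ (-s)) := by
        rw [setLIntegral_map measurableSet_closedBall hmble (measurable_add_const x)]
    _ = ∫⁻ w in closedBall (0 : EuclideanSpace ℝ (Fin 2)) T, ENNReal.ofReal (‖w‖ ^ (-s)) := by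
        congr 1
        · ext w
          simp [mem_closedBall, dist_eq_norm]
        · ext w
          congr 2
          rw [dist_eq_norm]
          simp
/-- If `G : (0,∞) × D × D → ℝ` satisfies `|G(r,x,y)| ≤ M (√r + |x−y|)^{−2} e^{−cr}` on a
bounded domain `D ⊂ ℝ²`, then for every `p ≥ 1` the covariance
`ρ(x,y) = ∫₀^∞ ∫_D G(r,x,z) G(r,y,z) dz dr` satisfies `‖ρ‖_{L^p(D×D)} ≤ C(p, D, M, c)`. -/
theorem stmt_2 (D : Set (EuclideanSpace ℝ (Fin 2))) (hD : Bornology.IsBounded D)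
    (M c : ℝ) (hM : 0 < M) (hc : 0 < c) (p : ℝ) (hp : 1 ≤ p) :
    ∃ C : ℝ, 0 < C ∧
      ∀ G : ℝ → EuclideanSpace ℝ (Fin 2) → EuclideanSpace ℝ (Fin 2) → ℝ,
        (∀ r : ℝ, 0 < r → ∀ x ∈ D, ∀ y ∈ D,
          |G r x y| ≤ M * (Real.sqrt r + dist x y) ^ (-(2 : ℝ)) * Real.exp (-c * r)) →
        (∫ x in D, ∫ y in D,
            |∫ r in Set.Ioi (0 : ℝ), ∫ z in D, G r x z * G r y z| ^ p) ^ (1 / p) ≤ C := by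
  have hp0 : (0:ℝ) < p := lt_of_lt_of_le one_pos hp
  set b : ℝ := 1 / (2*p) with hb
  have hb0 : 0 < b := by positivity
  have hb1 : b ≤ 1/2 := by
    rw [hb, div_le_div_iff₀ (by positivity) two_pos]; linarith
  set a : ℝ := 1 - b/2 with ha
  have ha0 : 0 < a := by rw [ha]; linarith
  have ha1 : a ≤ 1 := by rw [ha]; linarith
  have ha2 : a < 1 := by rw [ha]; linarith
  obtain ⟨r', hr'⟩ := hD.subset_closedBall 0
  set R : ℝ := 2*|r'| + 1 with hR
  have hR0 : 0 < R := by positivity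
  have hDsub : ∀ x ∈ D, D ⊆ closedBall x R := by
    intro x hx z hz
    have h1 : dist z 0 ≤ r' := mem_closedBall.1 (hr' hz)
    have h2 : dist x 0 ≤ r' := mem_closedBall.1 (hr' hx)
    have h3 : r' ≤ |r'| := le_abs_self r'
    rw [mem_closedBall]
    calc dist z x ≤ dist z 0 + dist 0 x := dist_triangle _ _ _
      _ = dist z 0 + dist x 0 := by rw [dist_comm (0:EuclideanSpace ℝ (Fin 2)) x]
      _ ≤ R := by rw [hR]; linarith
  set A₁ : ℝ≥0∞ :=
    ∫⁻ w in closedBall (0 : EuclideanSpace ℝ (Fin 2)) R, ENNReal.ofReal (‖w‖ ^ (-(2*a)))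
    with hA₁def
  have hA₁ : A₁ < ∞ := riesz_finite (by linarith) (by linarith [ha2]) R
  set A₂ : ℝ≥0∞ :=
    ∫⁻ w in closedBall (0 : EuclideanSpace ℝ (Fin 2)) R, ENNReal.ofReal (‖w‖ ^ (-(1:ℝ)))
    with hA₂def
  have hA₂ : A₂ < ∞ := riesz_finite one_pos one_lt_two R
  set B : ℝ≥0∞ := ∫⁻ r in Set.Ioi (0:ℝ), ENNReal.ofReal (r ^ (b/2 - 1) * Real.exp (-(2*c) * r))
    with hBdef
  have hB : B < ∞ := gamma_finite (by linarith) (by linarith) (by linarith)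
  have h2A₁B : 2 * A₁ * B ≠ ∞ :=
    ENNReal.mul_ne_top (ENNReal.mul_ne_top (by norm_num) hA₁.ne) hB.ne
  set κ : ℝ := (2 * A₁ * B).toReal * M^2 with hκ
  have hκ0 : 0 ≤ κ := mul_nonneg ENNReal.toReal_nonneg (sq_nonneg M)
  set S : ℝ≥0∞ := ENNReal.ofReal (κ^p * 2) * A₂ *
      volume (closedBall (0 : EuclideanSpace ℝ (Fin 2)) |r'|) with hSdef
  have hS : S < ∞ :=
    ENNReal.mul_lt_top (ENNReal.mul_lt_top ENNReal.ofReal_lt_top hA₂)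
      (isCompact_closedBall _ _).measure_lt_top
  refine ⟨S.toReal ^ (1/p) + 1, by positivity, ?_⟩
  intro G hG
  have hne : ∀ x : EuclideanSpace ℝ (Fin 2), ∀ᵐ z : EuclideanSpace ℝ (Fin 2) ∂volume, z ≠ x := by
    intro x
    rw [ae_iff]
    simp only [not_not, setOf_eq_eq_singleton]
    exact measure_singleton x
  -- Claim A : pointwise bound on the covariance
  have claimA : ∀ x ∈ D, ∀ y ∈ D, x ≠ y →
      (‖∫ r in Set.Ioi (0:ℝ), ∫ z in D, G r x z * G r y z‖₊ : ℝ≥0∞) ≤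
        ENNReal.ofReal (κ * (dist x y / 2) ^ (-(2*b))) := by
    intro x hx y hy hxy
    have hd0 : 0 < dist x y := dist_pos.2 hxy
    have hFr : ∀ r ∈ Set.Ioi (0:ℝ),
        (‖∫ z in D, G r x z * G r y z‖₊ : ℝ≥0∞) ≤
          (2 * A₁ * ENNReal.ofReal (M^2 * (dist x y/2) ^ (-(2*b)))) *
            ENNReal.ofReal (r ^ (b/2 - 1) * Real.exp (-(2*c) * r)) := by
      intro r hr
      rw [Set.mem_Ioi] at hr
      have hsq : 0 < Real.sqrt r := Real.sqrt_pos.2 hr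
      have hC₁nn : (0:ℝ) ≤ M^2 * Real.exp (-(2*c)*r) * ((dist x y/2) ^ (-(2*b)) * r ^ (b-1)) := by
        positivity
      have hz : ∀ z, z ∈ D → z ≠ x → z ≠ y →
          (‖G r x z * G r y z‖₊ : ℝ≥0∞) ≤
            ENNReal.ofReal ((M^2 * Real.exp (-(2*c)*r) * ((dist x y/2) ^ (-(2*b)) * r ^ (b-1))) *
              (r ^ (a-1) * (dist x z ^ (-(2*a)) + dist y z ^ (-(2*a))))) := by
        intro z hzD hzx hzy
        have hdx : 0 < dist x z := dist_pos.2 (Ne.symm hzx)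
        have hdy : 0 < dist y z := dist_pos.2 (Ne.symm hzy)
        have h1 := hG r hr x hx z hzD
        have h2 := hG r hr y hy z hzD
        rw [← enorm_eq_nnnorm, Real.enorm_eq_ofReal_abs]
        refine ENNReal.ofReal_le_ofReal ?_
        rw [abs_mul]
        have htri : dist x y ≤ dist x z + dist y z := by
          calc dist x y ≤ dist x z + dist z y := dist_triangle _ _ _
            _ = dist x z + dist y z := by rw [dist_comm z y]
        have hPB := prod_bound hr hdx hdy hd0 htri hb0 (by linarith) ha0 ha1
        have hexp : Real.exp (-c*r) * Real.exp (-c*r) = Real.exp (-(2*c)*r) := by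
          rw [← Real.exp_add]; congr 1; ring
        calc |G r x z| * |G r y z|
            ≤ (M * (Real.sqrt r + dist x z) ^ (-(2:ℝ)) * Real.exp (-c*r)) *
              (M * (Real.sqrt r + dist y z) ^ (-(2:ℝ)) * Real.exp (-c*r)) := by
              refine mul_le_mul h1 h2 (abs_nonneg _) (by positivity)
          _ = (M^2 * Real.exp (-(2*c)*r)) *
              ((Real.sqrt r + dist x z) ^ (-(2:ℝ)) * (Real.sqrt r + dist y z) ^ (-(2:ℝ))) := by
              rw [← hexp]; ring
          _ ≤ (M^2 * Real.exp (-(2*c)*r)) *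
              (((dist x y/2) ^ (-(2*b)) * r ^ (b-1)) *
                (r ^ (a-1) * (dist x z ^ (-(2*a)) + dist y z ^ (-(2*a))))) := by
              refine mul_le_mul_of_nonneg_left hPB (by positivity)
          _ = (M^2 * Real.exp (-(2*c)*r) * ((dist x y/2) ^ (-(2*b)) * r ^ (b-1))) *
              (r ^ (a-1) * (dist x z ^ (-(2*a)) + dist y z ^ (-(2*a)))) := by ring
      have hrr : r ^ (b-1) * r ^ (a-1) = r ^ (b/2-1) := by
        rw [← Real.rpow_add hr]; congr 1; rw [ha]; ring
      calc (‖∫ z in D, G r x z * G r y z‖₊ : ℝ≥0∞)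
          ≤ ∫⁻ z in D, (‖G r x z * G r y z‖₊ : ℝ≥0∞) :=
            enorm_integral_le_lintegral_enorm _
        _ ≤ ∫⁻ z in D,
              ENNReal.ofReal (M^2 * Real.exp (-(2*c)*r) *
                  ((dist x y/2) ^ (-(2*b)) * r ^ (b-1))) *
                (ENNReal.ofReal (r ^ (a-1)) *
                  (ENNReal.ofReal (dist x z ^ (-(2*a))) +
                   ENNReal.ofReal (dist y z ^ (-(2*a))))) := by
            refine setLIntegral_mono_ae ((by fun_prop : Measurable _).aemeasurable) ?_
            filter_upwards [hne x, hne y] with z hzx hzy hzD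
            calc (‖G r x z * G r y z‖₊ : ℝ≥0∞)
                ≤ ENNReal.ofReal
                    ((M^2 * Real.exp (-(2*c)*r) * ((dist x y/2) ^ (-(2*b)) * r ^ (b-1))) *
                      (r ^ (a-1) * (dist x z ^ (-(2*a)) + dist y z ^ (-(2*a))))) :=
                  hz z hzD hzx hzy
              _ = _ := by
                  rw [ENNReal.ofReal_mul hC₁nn,
                    ENNReal.ofReal_mul (rpow_nonneg hr.le _),
                    ENNReal.ofReal_add (rpow_nonneg dist_nonneg _) (rpow_nonneg dist_nonneg _)]
        _ = ENNReal.ofReal (M^2 * Real.exp (-(2*c)*r) *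
                ((dist x y/2) ^ (-(2*b)) * r ^ (b-1))) *
              (ENNReal.ofReal (r ^ (a-1)) *
                ((∫⁻ z in D, ENNReal.ofReal (dist x z ^ (-(2*a)))) +
                 ∫⁻ z in D, ENNReal.ofReal (dist y z ^ (-(2*a))))) := by
            rw [lintegral_const_mul' _ _ ENNReal.ofReal_ne_top,
              lintegral_const_mul' _ _ ENNReal.ofReal_ne_top,
              lintegral_add_left (by fun_prop)]
        _ ≤ ENNReal.ofReal (M^2 * Real.exp (-(2*c)*r) *
                ((dist x y/2) ^ (-(2*b)) * r ^ (b-1))) *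
              (ENNReal.ofReal (r ^ (a-1)) * (A₁ + A₁)) := by
            gcongr
            · refine le_trans (lintegral_mono' (Measure.restrict_mono (hDsub x hx) le_rfl)
                le_rfl) ?_
              exact le_of_eq (transl x R)
            · refine le_trans (lintegral_mono' (Measure.restrict_mono (hDsub y hy) le_rfl)
                le_rfl) ?_
              exact le_of_eq (transl y R)
        _ = (2 * A₁ * ENNReal.ofReal (M^2 * (dist x y/2) ^ (-(2*b)))) *
              ENNReal.ofReal (r ^ (b/2 - 1) * Real.exp (-(2*c) * r)) := by
            rw [← two_mul]
            calc ENNReal.ofReal (M^2 * Real.exp (-(2*c)*r) *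
                    ((dist x y/2) ^ (-(2*b)) * r ^ (b-1))) *
                  (ENNReal.ofReal (r ^ (a-1)) * (2 * A₁))
                = (2 * A₁) * ENNReal.ofReal ((M^2 * Real.exp (-(2*c)*r) *
                    ((dist x y/2) ^ (-(2*b)) * r ^ (b-1))) * r ^ (a-1)) := by
                  rw [ENNReal.ofReal_mul hC₁nn]; ring
              _ = (2 * A₁) * (ENNReal.ofReal (M^2 * (dist x y/2) ^ (-(2*b))) *
                    ENNReal.ofReal (r ^ (b/2-1) * Real.exp (-(2*c)*r))) := by
                  rw [← ENNReal.ofReal_mul (by positivity)]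
                  congr 1
                  rw [show (M^2 * Real.exp (-(2*c)*r) * ((dist x y/2) ^ (-(2*b)) * r ^ (b-1))) *
                        r ^ (a-1) =
                      (M^2 * (dist x y/2) ^ (-(2*b))) *
                        ((r ^ (b-1) * r ^ (a-1)) * Real.exp (-(2*c)*r)) from by ring, hrr]
              _ = _ := by ring
    calc (‖∫ r in Set.Ioi (0:ℝ), ∫ z in D, G r x z * G r y z‖₊ : ℝ≥0∞)
        ≤ ∫⁻ r in Set.Ioi (0:ℝ), (‖∫ z in D, G r x z * G r y z‖₊ : ℝ≥0∞) :=
          enorm_integral_le_lintegral_enorm _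
      _ ≤ ∫⁻ r in Set.Ioi (0:ℝ),
            (2 * A₁ * ENNReal.ofReal (M^2 * (dist x y/2) ^ (-(2*b)))) *
              ENNReal.ofReal (r ^ (b/2 - 1) * Real.exp (-(2*c) * r)) :=
          setLIntegral_mono_ae ((by fun_prop : Measurable _).aemeasurable)
            (Filter.Eventually.of_forall hFr)
      _ = (2 * A₁ * ENNReal.ofReal (M^2 * (dist x y/2) ^ (-(2*b)))) * B := by
          rw [lintegral_const_mul' _ _
            (ENNReal.mul_ne_top (ENNReal.mul_ne_top (by norm_num) hA₁.ne) ENNReal.ofReal_ne_top)]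
      _ = ENNReal.ofReal (κ * (dist x y / 2) ^ (-(2*b))) := by
          have : 2 * A₁ * B = ENNReal.ofReal ((2 * A₁ * B).toReal) :=
            (ENNReal.ofReal_toReal h2A₁B).symm
          calc (2 * A₁ * ENNReal.ofReal (M^2 * (dist x y/2) ^ (-(2*b)))) * B
              = (2 * A₁ * B) * ENNReal.ofReal (M^2 * (dist x y/2) ^ (-(2*b))) := by ring
            _ = ENNReal.ofReal ((2 * A₁ * B).toReal) *
                  ENNReal.ofReal (M^2 * (dist x y/2) ^ (-(2*b))) := by rw [← this]
            _ = ENNReal.ofReal (κ * (dist x y / 2) ^ (-(2*b))) := by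
                rw [← ENNReal.ofReal_mul ENNReal.toReal_nonneg, hκ]
                congr 1
                ring
  -- Claim B : real pointwise bound with exponent p
  have claimB : ∀ x ∈ D, ∀ y ∈ D, x ≠ y →
      |∫ r in Set.Ioi (0:ℝ), ∫ z in D, G r x z * G r y z| ^ p ≤
        (κ^p * 2) * dist x y ^ (-(1:ℝ)) := by
    intro x hx y hy hxy
    have hd0 : 0 < dist x y := dist_pos.2 hxy
    have habs : |∫ r in Set.Ioi (0:ℝ), ∫ z in D, G r x z * G r y z| ≤
        κ * (dist x y / 2) ^ (-(2*b)) := by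
      have hA := claimA x hx y hy hxy
      rw [← enorm_eq_nnnorm, Real.enorm_eq_ofReal_abs] at hA
      exact (ENNReal.ofReal_le_ofReal_iff (by positivity)).1 hA
    have hexp : (-(2*b)) * p = -1 := by
      rw [hb]; field_simp
    calc |∫ r in Set.Ioi (0:ℝ), ∫ z in D, G r x z * G r y z| ^ p
        ≤ (κ * (dist x y / 2) ^ (-(2*b))) ^ p :=
          Real.rpow_le_rpow (abs_nonneg _) habs hp0.le
      _ = κ^p * ((dist x y / 2) ^ (-(2*b))) ^ p :=
          Real.mul_rpow hκ0 (rpow_nonneg (by positivity) _)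
      _ = κ^p * (dist x y / 2) ^ (-(1:ℝ)) := by
          rw [← Real.rpow_mul (by positivity : (0:ℝ) ≤ dist x y / 2), hexp]
      _ = (κ^p * 2) * dist x y ^ (-(1:ℝ)) := by
          rw [Real.rpow_neg_one, Real.rpow_neg_one, inv_div, div_eq_mul_inv]
          ring
  -- Claim C : bound for the inner integral in `y`
  have claimC : ∀ x ∈ D,
      (‖∫ y in D, |∫ r in Set.Ioi (0:ℝ), ∫ z in D, G r x z * G r y z| ^ p‖₊ : ℝ≥0∞) ≤
        ENNReal.ofReal (κ^p * 2) * A₂ := by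
    intro x hx
    calc (‖∫ y in D, |∫ r in Set.Ioi (0:ℝ), ∫ z in D, G r x z * G r y z| ^ p‖₊ : ℝ≥0∞)
        ≤ ∫⁻ y in D, (‖|∫ r in Set.Ioi (0:ℝ), ∫ z in D, G r x z * G r y z| ^ p‖₊ : ℝ≥0∞) :=
          enorm_integral_le_lintegral_enorm _
      _ ≤ ∫⁻ y in D, ENNReal.ofReal ((κ^p * 2) * dist x y ^ (-(1:ℝ))) := by
          refine setLIntegral_mono_ae ((by fun_prop : Measurable _).aemeasurable) ?_
          filter_upwards [hne x] with y hyx hyD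
          rw [← enorm_eq_nnnorm, Real.enorm_eq_ofReal_abs, abs_of_nonneg (rpow_nonneg (abs_nonneg _) _)]
          exact ENNReal.ofReal_le_ofReal (claimB x hx y hyD (Ne.symm hyx))
      _ = ENNReal.ofReal (κ^p * 2) *
            ∫⁻ y in D, ENNReal.ofReal (dist x y ^ (-(1:ℝ))) := by
          simp_rw [ENNReal.ofReal_mul (by positivity : (0:ℝ) ≤ κ^p * 2)]
          exact lintegral_const_mul' _ _ ENNReal.ofReal_ne_top
      _ ≤ ENNReal.ofReal (κ^p * 2) * A₂ := by
          gcongr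
          refine le_trans (lintegral_mono' (Measure.restrict_mono (hDsub x hx) le_rfl)
            le_rfl) ?_
          exact le_of_eq (transl x R)
  -- Final assembly
  have h0 : 0 ≤ ∫ x in D, ∫ y in D,
      |∫ r in Set.Ioi (0:ℝ), ∫ z in D, G r x z * G r y z| ^ p :=
    integral_nonneg fun x => integral_nonneg fun y => rpow_nonneg (abs_nonneg _) _
  have hle : (∫ x in D, ∫ y in D,
      |∫ r in Set.Ioi (0:ℝ), ∫ z in D, G r x z * G r y z| ^ p) ≤ S.toReal := by
    calc (∫ x in D, ∫ y in D, |∫ r in Set.Ioi (0:ℝ), ∫ z in D, G r x z * G r y z| ^ p)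
        ≤ ‖∫ x in D, ∫ y in D, |∫ r in Set.Ioi (0:ℝ), ∫ z in D, G r x z * G r y z| ^ p‖ :=
          le_abs_self _
      _ ≤ (∫⁻ x in D, ENNReal.ofReal
            ‖∫ y in D, |∫ r in Set.Ioi (0:ℝ), ∫ z in D, G r x z * G r y z| ^ p‖).toReal :=
          norm_integral_le_lintegral_norm _
      _ ≤ S.toReal := by
          refine ENNReal.toReal_mono hS.ne ?_
          calc (∫⁻ x in D, ENNReal.ofReal
                ‖∫ y in D, |∫ r in Set.Ioi (0:ℝ), ∫ z in D, G r x z * G r y z| ^ p‖)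
              ≤ ∫⁻ _ in D, (ENNReal.ofReal (κ^p * 2) * A₂) := by
                refine setLIntegral_mono_ae aemeasurable_const
                  (Filter.Eventually.of_forall fun x hx => ?_)
                rw [ofReal_norm]
                exact claimC x hx
            _ = (ENNReal.ofReal (κ^p * 2) * A₂) * volume D := setLIntegral_const _ _
            _ ≤ (ENNReal.ofReal (κ^p * 2) * A₂) *
                  volume (closedBall (0 : EuclideanSpace ℝ (Fin 2)) |r'|) := by
                gcongr
                exact hr'.trans (closedBall_subset_closedBall (le_abs_self r'))
            _ = S := by rw [hSdef]
  calc (∫ x in D, ∫ y in D,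
        |∫ r in Set.Ioi (0:ℝ), ∫ z in D, G r x z * G r y z| ^ p) ^ (1/p)
      ≤ S.toReal ^ (1/p) := Real.rpow_le_rpow h0 hle (by positivity)
    _ ≤ S.toReal ^ (1/p) + 1 := by linarith
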